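/- (Per-step inequality (r1).) Under the stated setup, for every t ∈ ℕ, every a ∈ ℝⁿ, and every w ∈ ℝ^p: Φ(α(t+1)) − Φ(a) ≤ ½‖a − α(t)‖²_{C⁻¹} − ½‖a − α(t+1)‖²_{C⁻¹} − ½‖α(t) − α(t+1)‖²_{C⁻¹ − H} + ½‖w − ω((t−d)⁺)‖²_{S⁻¹} − ½‖w − ω(t+1)‖²_{S⁻¹} − ½‖ω((t−d)⁺) − ω(t+1)‖²_{S⁻¹} + ⟨ω(t+1), Z·a⟩ − ⟨w, Z·α(t+1)⟩ − ½‖a − α((t−d)⁺)‖²_{ZᵀSZ} + ½‖a − α(t+1)‖²_{ZᵀSZ} + ½‖α((t−d)⁺) − α(t+1)‖²_{ZᵀSZ}. -/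

import Mathlib

open Matrix Finset

/-- The quadratic form `‖x‖²_A = xᵀ A x`. -/
noncomputable def qf {k : ℕ} (A : Matrix (Fin k) (Fin k) ℝ) (x : Fin k → ℝ) : ℝ :=
  x ⬝ᵥ (A *ᵥ x)

private lemma dot_swap {k l : ℕ} (A : Matrix (Fin k) (Fin l) ℝ) (x : Fin k → ℝ)
    (y : Fin l → ℝ) : x ⬝ᵥ (A *ᵥ y) = y ⬝ᵥ (Aᵀ *ᵥ x) := by
  rw [Matrix.dotProduct_mulVec, ← Matrix.mulVec_transpose, dotProduct_comm]

private lemma dot_symm {k : ℕ} {M : Matrix (Fin k) (Fin k) ℝ} (hM : Mᵀ = M)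
    (x y : Fin k → ℝ) : x ⬝ᵥ (M *ᵥ y) = y ⬝ᵥ (M *ᵥ x) := by
  rw [dot_swap, hM]

/-- per-step inequality (r1) of the Asyn-DDPG algorithm. -/
theorem asyn_ddpg_per_step_inequality
    (n p : ℕ) (Z : Matrix (Fin p) (Fin n) ℝ)
    (C Hm : Matrix (Fin n) (Fin n) ℝ) (S : Matrix (Fin p) (Fin p) ℝ)
    (hC : C.PosDef) (hHm : Hm.PosDef) (hS : S.PosDef)
    (d : ℕ) (hd : 1 ≤ d)
    (Hs Hr : (Fin n → ℝ) → ℝ) (gs : (Fin n → ℝ) → (Fin n → ℝ))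
    (hconv_s : ∀ a b : Fin n → ℝ, Hs a + gs a ⬝ᵥ (b - a) ≤ Hs b)
    (hsmooth : ∀ a b : Fin n → ℝ, Hs b ≤ Hs a + gs a ⬝ᵥ (b - a) + 1 / 2 * qf Hm (b - a))
    (hr : ConvexOn ℝ Set.univ Hr)
    (α : ℕ → Fin n → ℝ) (ω : ℕ → Fin p → ℝ)
    (hα : ∀ t : ℕ, ∀ v : Fin n → ℝ,
      Hr (α (t + 1)) + 1 / 2 * qf C⁻¹ (α (t + 1) -
          (α t - C *ᵥ (gs (α t) + Zᵀ *ᵥ ω (t - d) + (Zᵀ * S * Z) *ᵥ α (t - d))))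
        ≤ Hr v + 1 / 2 * qf C⁻¹ (v -
          (α t - C *ᵥ (gs (α t) + Zᵀ *ᵥ ω (t - d) + (Zᵀ * S * Z) *ᵥ α (t - d)))))
    (hω : ∀ t : ℕ, ω (t + 1) = ω (t - d) + (S * Z) *ᵥ α (t + 1))
    (t : ℕ) (a : Fin n → ℝ) (w : Fin p → ℝ) :
    (Hs (α (t + 1)) + Hr (α (t + 1))) - (Hs a + Hr a)
      ≤ 1 / 2 * qf C⁻¹ (a - α t) - 1 / 2 * qf C⁻¹ (a - α (t + 1))
        - 1 / 2 * qf (C⁻¹ - Hm) (α t - α (t + 1))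
        + 1 / 2 * qf S⁻¹ (w - ω (t - d)) - 1 / 2 * qf S⁻¹ (w - ω (t + 1))
        - 1 / 2 * qf S⁻¹ (ω (t - d) - ω (t + 1))
        + ω (t + 1) ⬝ᵥ (Z *ᵥ a) - w ⬝ᵥ (Z *ᵥ α (t + 1))
        - 1 / 2 * qf (Zᵀ * S * Z) (a - α (t - d))
        + 1 / 2 * qf (Zᵀ * S * Z) (a - α (t + 1))
        + 1 / 2 * qf (Zᵀ * S * Z) (α (t - d) - α (t + 1)) := by
  -- basic symmetry / invertibility facts
  have hCT : Cᵀ = C := hC.isHermitian.eq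
  have hST : Sᵀ = S := hS.isHermitian.eq
  have hHmT : Hmᵀ = Hm := hHm.isHermitian.eq
  have hCIT : (C⁻¹)ᵀ = C⁻¹ := by rw [Matrix.transpose_nonsing_inv, hCT]
  have hSIT : (S⁻¹)ᵀ = S⁻¹ := by rw [Matrix.transpose_nonsing_inv, hST]
  have hNT : (Zᵀ * S * Z)ᵀ = Zᵀ * S * Z := by
    simp [Matrix.transpose_mul, Matrix.mul_assoc, hST]
  have hCdet : IsUnit C.det := isUnit_iff_ne_zero.mpr hC.det_pos.ne'
  have hSdet : IsUnit S.det := isUnit_iff_ne_zero.mpr hS.det_pos.ne'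
  -- abbreviations
  have hαt := hα t
  set g : Fin n → ℝ := gs (α t) + Zᵀ *ᵥ ω (t - d) + (Zᵀ * S * Z) *ᵥ α (t - d) with hg
  set u : Fin n → ℝ := α t - C *ᵥ g with hu
  set y : Fin n → ℝ := α (t + 1) with hy
  -- step 1: the subgradient inequality for the prox step
  have hQ : 0 ≤ (a - y) ⬝ᵥ (C⁻¹ *ᵥ (a - y)) := by
    have := hC.inv.posSemidef.dotProduct_mulVec_nonneg (a - y)
    simpa using this
  set Q : ℝ := (a - y) ⬝ᵥ (C⁻¹ *ᵥ (a - y)) with hQdef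
  set cross : ℝ := (a - y) ⬝ᵥ (C⁻¹ *ᵥ (y - u)) with hcross
  have hstep : ∀ lam : ℝ, 0 < lam → lam ≤ 1 →
      0 ≤ lam * (Hr a - Hr y + cross) + lam ^ 2 / 2 * Q := by
    intro lam hl0 hl1
    have hconv := hr.2 (Set.mem_univ y) (Set.mem_univ a)
      (by linarith : (0:ℝ) ≤ 1 - lam) hl0.le (by ring)
    have hvlam : (1 - lam) • y + lam • a = y + lam • (a - y) := by module
    rw [hvlam] at hconv
    have h1 := hαt (y + lam • (a - y))
    have hexp : qf C⁻¹ (y + lam • (a - y) - u)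
        = qf C⁻¹ (y - u) + 2 * lam * cross + lam ^ 2 * Q := by
      have h0 : y + lam • (a - y) - u = (y - u) + lam • (a - y) := by module
      rw [h0]
      simp only [qf, Matrix.mulVec_add, Matrix.mulVec_smul, dotProduct_add,
        add_dotProduct, dotProduct_smul, smul_dotProduct, smul_eq_mul]
      have hs1 : (y - u) ⬝ᵥ (C⁻¹ *ᵥ (a - y)) = (a - y) ⬝ᵥ (C⁻¹ *ᵥ (y - u)) :=
        dot_symm hCIT _ _
      rw [hs1, hcross, hQdef]
      ring
    rw [hexp] at h1
    simp only [smul_eq_mul] at hconv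
    linarith [h1, hconv]
  have hD : 0 ≤ Hr a - Hr y + cross := by
    by_contra hcon
    push_neg at hcon
    set D : ℝ := Hr a - Hr y + cross with hDdef
    set lam : ℝ := min 1 (-D / (Q + 1)) with hlam
    have hl0 : 0 < lam := lt_min one_pos (div_pos (by linarith) (by linarith))
    have hl1 : lam ≤ 1 := min_le_left _ _
    have h2 := hstep lam hl0 hl1
    have h3 : lam ≤ -D / (Q + 1) := min_le_right _ _
    have h4 : lam * (Q + 1) ≤ -D := (le_div_iff₀ (by linarith)).mp h3
    nlinarith [mul_le_mul_of_nonneg_left h4 hl0.le, mul_pos hl0 (neg_pos.mpr hcon),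
      sq_nonneg lam]
  -- rewrite cross
  have hyu : C⁻¹ *ᵥ (y - u) = C⁻¹ *ᵥ (y - α t) + g := by
    have h5 : y - u = (y - α t) + C *ᵥ g := by rw [hu]; module
    rw [h5, Matrix.mulVec_add, Matrix.mulVec_mulVec, Matrix.nonsing_inv_mul C hCdet,
      Matrix.one_mulVec]
  rw [hcross, hyu, hg] at hD
  -- the three functional inequalities
  have hF2 := hsmooth (α t) y
  have hF3 := hconv_s (α t) a
  -- canonical cancellation for S
  have hcan : S⁻¹ *ᵥ ((S * Z) *ᵥ α (t + 1)) = Z *ᵥ α (t + 1) := by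
    rw [Matrix.mulVec_mulVec, ← Matrix.mul_assoc, Matrix.nonsing_inv_mul S hSdet,
      Matrix.one_mul]
  have hNy : (Zᵀ * S * Z) *ᵥ α (t + 1) = Zᵀ *ᵥ ((S * Z) *ᵥ α (t + 1)) := by
    rw [Matrix.mulVec_mulVec, Matrix.mul_assoc]
  -- bridges
  have b1 : ((S * Z) *ᵥ α (t + 1)) ⬝ᵥ (S⁻¹ *ᵥ w) = w ⬝ᵥ (Z *ᵥ α (t + 1)) := by
    rw [dot_symm hSIT, hcan]
  have b2 : ((S * Z) *ᵥ α (t + 1)) ⬝ᵥ (S⁻¹ *ᵥ ω (t - d)) = ω (t - d) ⬝ᵥ (Z *ᵥ α (t + 1)) := by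
    rw [dot_symm hSIT, hcan]
  have b3 : a ⬝ᵥ ((Zᵀ * S * Z) *ᵥ α (t + 1)) = ((S * Z) *ᵥ α (t + 1)) ⬝ᵥ (Z *ᵥ a) := by
    rw [hNy, dot_swap, Matrix.transpose_transpose]
  have b4 : α (t + 1) ⬝ᵥ ((Zᵀ * S * Z) *ᵥ α (t + 1))
      = ((S * Z) *ᵥ α (t + 1)) ⬝ᵥ (Z *ᵥ α (t + 1)) := by
    rw [hNy, dot_swap, Matrix.transpose_transpose]
  have b5 : a ⬝ᵥ (C⁻¹ *ᵥ α t) = α t ⬝ᵥ (C⁻¹ *ᵥ a) := dot_symm hCIT _ _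
  have b6 : a ⬝ᵥ (C⁻¹ *ᵥ α (t + 1)) = α (t + 1) ⬝ᵥ (C⁻¹ *ᵥ a) := dot_symm hCIT _ _
  have b7 : α t ⬝ᵥ (C⁻¹ *ᵥ α (t + 1)) = α (t + 1) ⬝ᵥ (C⁻¹ *ᵥ α t) := dot_symm hCIT _ _
  have b8 : α t ⬝ᵥ (Hm *ᵥ α (t + 1)) = α (t + 1) ⬝ᵥ (Hm *ᵥ α t) := dot_symm hHmT _ _
  have b9 : w ⬝ᵥ (S⁻¹ *ᵥ ω (t - d)) = ω (t - d) ⬝ᵥ (S⁻¹ *ᵥ w) := dot_symm hSIT _ _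
  have b10 : a ⬝ᵥ ((Zᵀ * S * Z) *ᵥ α (t - d))
      = α (t - d) ⬝ᵥ ((Zᵀ * S * Z) *ᵥ a) := dot_symm hNT _ _
  have b11 : a ⬝ᵥ ((Zᵀ * S * Z) *ᵥ α (t + 1))
      = α (t + 1) ⬝ᵥ ((Zᵀ * S * Z) *ᵥ a) := dot_symm hNT _ _
  have b12 : α (t - d) ⬝ᵥ ((Zᵀ * S * Z) *ᵥ α (t + 1))
      = α (t + 1) ⬝ᵥ ((Zᵀ * S * Z) *ᵥ α (t - d)) := dot_symm hNT _ _
  have b13 : a ⬝ᵥ gs (α t) = gs (α t) ⬝ᵥ a := dotProduct_comm _ _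
  have b14 : α (t + 1) ⬝ᵥ gs (α t) = gs (α t) ⬝ᵥ α (t + 1) := dotProduct_comm _ _
  have b15 : a ⬝ᵥ (Zᵀ *ᵥ ω (t - d)) = ω (t - d) ⬝ᵥ (Z *ᵥ a) := by
    rw [dot_swap, Matrix.transpose_transpose]
  have b16 : α (t + 1) ⬝ᵥ (Zᵀ *ᵥ ω (t - d)) = ω (t - d) ⬝ᵥ (Z *ᵥ α (t + 1)) := by
    rw [dot_swap, Matrix.transpose_transpose]
  rw [hy] at hD hF2 ⊢
  rw [hω t]
  simp only [qf, Matrix.mulVec_sub, Matrix.mulVec_add, Matrix.sub_mulVec,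
    Matrix.add_mulVec, sub_add_cancel_left, Matrix.mulVec_neg, dotProduct_sub,
    sub_dotProduct, dotProduct_add, add_dotProduct, dotProduct_neg, neg_dotProduct,
    neg_neg, hcan] at hD hF2 hF3 ⊢
  linarith [hD, hF2, hF3, b1, b2, b3, b4, b5, b6, b7, b8, b9, b10, b11, b12, b13,
    b14, b15, b16]
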